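/- Let 0 < ε < 1/8 and set β̃(ε,Q) = (ε + (Q−1)/β(ε,Q))^{−1}, where β(ε,Q) = (ε/3)^{3^Q}. Then for every T ∈ 𝒜_Q(ℝⁿ) there exist q ≤ Q and points S_0, S_1, …, S_q ∈ 𝒜_Q(ℝⁿ) such that S_0 = Q⟦t⟧ for some t ∈ spt(T), S_q = T, and: (1) spt(S_k) ⊂ spt(T) for every k = 0, …, q; (2) for every k = 0, …, q, spt(T) ⊂ 𝒫_ε(S_k) and T is balanced with respect to S_k and ε (with the convention that 𝒫_ε(S) = ℝⁿ and every T is balanced when S is a single Q-fold point Q⟦t⟧); (3) β̃(ε,Q)^k · 𝒢(S_{k−1}, S_k) ≤ sep(S_k) for every k = 1, …, q. -/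

import Mathlib

open scoped BigOperators ENNReal

/-- The distance `𝒢` on the space of `Q`-points, defined on labelings of the points:
the minimum over permutations of the square root of the sum of squared distances. -/
noncomputable def Gdist {ι : Type*} [Fintype ι] {n : ℕ}
    (p s : ι → EuclideanSpace ℝ (Fin n)) : ℝ :=
  ⨅ σ : Equiv.Perm ι, Real.sqrt (∑ i, dist (p i) (s (σ i)) ^ 2)

/-- The separation `sep(S) = min {|p_i - p_j| : p_i ≠ p_j}` of a `Q`-point,
with value `+∞` when all the points coincide. -/
noncomputable def sepE {n Q : ℕ} (p : Fin Q → EuclideanSpace ℝ (Fin n)) : ℝ≥0∞ :=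
  ⨅ (i : Fin Q) (j : Fin Q) (_ : p i ≠ p j), edist (p i) (p j)

/-- The quantity `r_i(S)`: the distance from the point `p i` of `S` to the nearest
distinct point of `S`, with value `+∞` when `S` is a single `Q`-fold point. -/
noncomputable def rsepE {n Q : ℕ} (p : Fin Q → EuclideanSpace ℝ (Fin n)) (i : Fin Q) : ℝ≥0∞ :=
  ⨅ (j : Fin Q) (_ : p j ≠ p i), edist (p i) (p j)

/-- A point with index `x` lies in the projection neighborhood `𝒫_ε(S)`, namely in the
ball `B_{ε r_i}` around the `i`-th point of `S` (with the convention `𝒫_ε(S) = ℝⁿ` when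
`S` is a single `Q`-fold point, since then `r_i = ∞`). -/
def InProjNbhd {n Q : ℕ} (ε : ℝ) (p : Fin Q → EuclideanSpace ℝ (Fin n))
    (x : EuclideanSpace ℝ (Fin n)) (i : Fin Q) : Prop :=
  edist x (p i) < ENNReal.ofReal ε * rsepE p i

open scoped Classical



namespace Stmt3Aux

variable {n Q : ℕ}

/-- Threshold graph at scale `t`. -/
noncomputable def Gph (T : Fin Q → EuclideanSpace ℝ (Fin n)) (t : ℝ) : SimpleGraph (Fin Q) :=
  SimpleGraph.fromRel (fun x y => dist (T x) (T y) ≤ t)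

/-- Connectivity at scale `t`. -/
def Reach (T : Fin Q → EuclideanSpace ℝ (Fin n)) (t : ℝ) (x y : Fin Q) : Prop :=
  (Gph T t).Reachable x y

variable {T : Fin Q → EuclideanSpace ℝ (Fin n)} {t t' : ℝ} {x y : Fin Q}

lemma gph_adj : (Gph T t).Adj x y ↔ x ≠ y ∧ dist (T x) (T y) ≤ t := by
  rw [Gph, SimpleGraph.fromRel_adj]
  constructor
  · rintro ⟨h1, h2 | h2⟩
    · exact ⟨h1, h2⟩
    · exact ⟨h1, by rwa [dist_comm]⟩
  · rintro ⟨h1, h2⟩; exact ⟨h1, Or.inl h2⟩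

lemma reach_refl (T : Fin Q → EuclideanSpace ℝ (Fin n)) (t : ℝ) (x : Fin Q) :
    Reach T t x x := SimpleGraph.Reachable.refl x

lemma reach_symm (h : Reach T t x y) : Reach T t y x := SimpleGraph.Reachable.symm h

lemma reach_trans {z : Fin Q} (h : Reach T t x y) (h' : Reach T t y z) : Reach T t x z :=
  SimpleGraph.Reachable.trans h h'

lemma reach_of_dist_le (h : dist (T x) (T y) ≤ t) : Reach T t x y := by
  by_cases hxy : x = y
  · subst hxy; exact reach_refl T t x
  · exact (gph_adj.mpr ⟨hxy, h⟩).reachable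

lemma lt_dist_of_not_reach (h : ¬ Reach T t x y) : t < dist (T x) (T y) := by
  by_contra h'
  exact h (reach_of_dist_le (not_lt.mp h'))

lemma reach_mono (htt : t' ≤ t) (h : Reach T t' x y) : Reach T t x y := by
  refine SimpleGraph.Reachable.mono ?_ h
  intro a b hab
  rw [gph_adj] at hab ⊢
  exact ⟨hab.1, hab.2.trans htt⟩

lemma dist_walk_le (ht : 0 ≤ t) : ∀ {x y : Fin Q} (w : (Gph T t).Walk x y),
    dist (T x) (T y) ≤ w.length * t := by
  intro x y w
  induction w with
  | nil => simp
  | @cons a b c h p ih =>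
      have hab : dist (T a) (T b) ≤ t := (gph_adj.mp h).2
      calc dist (T a) (T c) ≤ dist (T a) (T b) + dist (T b) (T c) := dist_triangle _ _ _
        _ ≤ t + p.length * t := add_le_add hab ih
        _ = (p.cons h).length * t := by
            rw [SimpleGraph.Walk.length_cons]; push_cast; ring

lemma dist_le_of_reach (ht : 0 ≤ t) (h : Reach T t x y) :
    dist (T x) (T y) ≤ ((Q : ℝ) - 1) * t := by
  obtain ⟨w⟩ := h
  have h1 := dist_walk_le ht w.bypass
  have h2 : w.bypass.length < Q := by
    simpa using w.bypass_isPath.length_lt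
  have h3 : (w.bypass.length : ℝ) ≤ (Q : ℝ) - 1 := by
    have : (w.bypass.length : ℕ) + 1 ≤ Q := h2
    have := Nat.cast_le (α := ℝ).mpr this
    push_cast at this
    linarith
  exact h1.trans (mul_le_mul_of_nonneg_right h3 ht)

lemma reach_eq_of_small (hsmall : ∀ a b : Fin Q, dist (T a) (T b) ≤ t → T a = T b)
    (h : Reach T t x y) : T x = T y := by
  obtain ⟨w⟩ := h
  induction w with
  | nil => rfl
  | @cons a b c h p ih => exact (hsmall a b (gph_adj.mp h).2).trans ih

/-- The cluster (connected component) of `x` at scale `t`. -/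
noncomputable def cls (T : Fin Q → EuclideanSpace ℝ (Fin n)) (t : ℝ) (x : Fin Q) :
    Finset (Fin Q) :=
  Finset.univ.filter fun y => Reach T t y x

lemma mem_cls : y ∈ cls T t x ↔ Reach T t y x := by simp [cls]

lemma cls_nonempty (T : Fin Q → EuclideanSpace ℝ (Fin n)) (t : ℝ) (x : Fin Q) :
    (cls T t x).Nonempty := ⟨x, mem_cls.mpr (reach_refl T t x)⟩

private lemma min'_eq_min' {α : Type*} [LinearOrder α] {s s' : Finset α} (h : s = s')
    (hs : s.Nonempty) (hs' : s'.Nonempty) : s.min' hs = s'.min' hs' := by subst h; rfl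

/-- The representative point of the cluster of `x` at scale `t`. -/
noncomputable def rep (T : Fin Q → EuclideanSpace ℝ (Fin n)) (t : ℝ) (x : Fin Q) :
    EuclideanSpace ℝ (Fin n) :=
  T ((cls T t x).min' (cls_nonempty T t x))

lemma rep_spec (T : Fin Q → EuclideanSpace ℝ (Fin n)) (t : ℝ) (x : Fin Q) :
    ∃ m, Reach T t m x ∧ rep T t x = T m :=
  ⟨_, mem_cls.mp ((cls T t x).min'_mem (cls_nonempty T t x)), rfl⟩

lemma cls_congr (h : Reach T t x y) : cls T t x = cls T t y := by
  ext z
  simp only [mem_cls]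
  exact ⟨fun h' => reach_trans h' h, fun h' => reach_trans h' (reach_symm h)⟩

lemma rep_eq_of_reach (h : Reach T t x y) : rep T t x = rep T t y :=
  congrArg T (min'_eq_min' (cls_congr h) _ _)

lemma reach_of_rep_eq (ht : 0 ≤ t) (h : rep T t x = rep T t y) : Reach T t x y := by
  obtain ⟨m1, hm1, e1⟩ := rep_spec T t x
  obtain ⟨m2, hm2, e2⟩ := rep_spec T t y
  have hd : dist (T m1) (T m2) ≤ t := by
    rw [← e1, ← e2, h, dist_self]; exact ht
  exact reach_trans (reach_symm hm1) (reach_trans (reach_of_dist_le hd) hm2)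

lemma rep_eq_iff (ht : 0 ≤ t) : rep T t x = rep T t y ↔ Reach T t x y :=
  ⟨reach_of_rep_eq ht, rep_eq_of_reach⟩

lemma rep_congr (hiff : ∀ a b : Fin Q, Reach T t a b ↔ Reach T t' a b) :
    rep T t = rep T t' := by
  funext x
  have h : cls T t x = cls T t' x := by
    ext z; simp only [mem_cls]; exact hiff z x
  exact congrArg T (min'_eq_min' h _ _)

lemma reach_iff_of_rep_eq (ht : 0 ≤ t) (ht' : 0 ≤ t') (h : rep T t = rep T t') :
    ∀ a b : Fin Q, Reach T t a b ↔ Reach T t' a b := by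
  intro a b
  rw [← rep_eq_iff (T := T) ht, ← rep_eq_iff (T := T) ht', congrFun h a, congrFun h b]

/-- Number of clusters at scale `t`. -/
noncomputable def Npart (T : Fin Q → EuclideanSpace ℝ (Fin n)) (t : ℝ) : ℕ :=
  (Finset.univ.image (rep T t)).card

lemma npart_le_Q (T : Fin Q → EuclideanSpace ℝ (Fin n)) (t : ℝ) : Npart T t ≤ Q :=
  le_trans Finset.card_image_le (by simp)

lemma npart_pos (hQ : 0 < Q) (T : Fin Q → EuclideanSpace ℝ (Fin n)) (t : ℝ) :
    0 < Npart T t := by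
  rw [Npart, Finset.card_pos]
  exact ⟨rep T t ⟨0, hQ⟩, Finset.mem_image_of_mem _ (Finset.mem_univ _)⟩

lemma rep_factor (ht' : 0 ≤ t') (htt : t' ≤ t) (h : rep T t' x = rep T t' y) :
    rep T t x = rep T t y :=
  rep_eq_of_reach (reach_mono htt (reach_of_rep_eq ht' h))

lemma npart_mono_aux (ht' : 0 ≤ t') (htt : t' ≤ t) :
    Npart T t ≤ Npart T t' ∧ (rep T t ≠ rep T t' → Npart T t < Npart T t') := by
  set F : EuclideanSpace ℝ (Fin n) → EuclideanSpace ℝ (Fin n) :=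
    fun e => if h : ∃ x, rep T t' x = e then rep T t h.choose else e with hF
  have key : ∀ x, F (rep T t' x) = rep T t x := by
    intro x
    have hx : ∃ z, rep T t' z = rep T t' x := ⟨x, rfl⟩
    simp only [hF, dif_pos hx]
    exact rep_factor ht' htt hx.choose_spec
  have himg : Finset.univ.image (rep T t) = (Finset.univ.image (rep T t')).image F := by
    rw [Finset.image_image]
    apply Finset.image_congr
    intro x _
    exact (key x).symm
  constructor
  · rw [Npart, himg]; exact Finset.card_image_le
  · intro hne
    have hle : Npart T t ≤ Npart T t' := by
      rw [Npart, himg, Npart]; exact Finset.card_image_le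
    rcases lt_or_eq_of_le hle with h | h
    · exact h
    · exfalso
      have hinj : Set.InjOn F (Finset.univ.image (rep T t')) := by
        apply Finset.injOn_of_card_image_eq
        rw [← himg]
        exact h
      have hrel : ∀ a b : Fin Q, Reach T t a b ↔ Reach T t' a b := by
        intro a b
        constructor
        · intro hr
          have h1 : rep T t a = rep T t b := rep_eq_of_reach hr
          have h2 : rep T t' a = rep T t' b := by
            apply hinj (Finset.mem_coe.mpr (Finset.mem_image_of_mem _ (Finset.mem_univ a)))
              (Finset.mem_coe.mpr (Finset.mem_image_of_mem _ (Finset.mem_univ b)))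
            rw [key a, key b]; exact h1
          exact reach_of_rep_eq ht' h2
        · exact reach_mono htt
      exact hne (rep_congr hrel)

lemma npart_mono (ht' : 0 ≤ t') (htt : t' ≤ t) : Npart T t ≤ Npart T t' :=
  (npart_mono_aux ht' htt).1

lemma npart_strict (ht' : 0 ≤ t') (htt : t' ≤ t) (hne : rep T t ≠ rep T t') :
    Npart T t < Npart T t' :=
  (npart_mono_aux ht' htt).2 hne


lemma dist_rep_le (hQ : 0 < Q) (ht : 0 ≤ t) (x : Fin Q) :
    dist (T x) (rep T t x) ≤ ((Q : ℝ) - 1) * t := by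
  obtain ⟨m, hm, e⟩ := rep_spec T t x
  rw [e, dist_comm]
  exact dist_le_of_reach ht hm

lemma balance_core (hQ : 0 < Q) {ε s : ℝ} (hε0 : 0 < ε) (hε8 : ε < 1/8)
    (ht : 0 < t) (hs : 0 < s) (hts : ((Q : ℝ) - 1) * t * 3 ≤ ε * s)
    (hsep : ∀ x y : Fin Q, ¬ Reach T t x y → s < dist (T x) (T y)) :
    (∀ x i : Fin Q, InProjNbhd ε (rep T t) (T x) i ↔ Reach T t x i)
      ∧ ENNReal.ofReal s ≤ sepE (rep T t) := by
  have hQ1 : (1 : ℝ) ≤ Q := by exact_mod_cast hQ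
  have hpair : ∀ i j : Fin Q, rep T t i ≠ rep T t j →
      ENNReal.ofReal s ≤ edist (rep T t i) (rep T t j) := by
    intro i j hne
    obtain ⟨m1, hm1, e1⟩ := rep_spec T t i
    obtain ⟨m2, hm2, e2⟩ := rep_spec T t j
    have hnr : ¬ Reach T t m1 m2 := by
      intro h
      exact hne (rep_eq_of_reach (reach_trans (reach_symm hm1) (reach_trans h hm2)))
    have hlt := hsep _ _ hnr
    rw [e1, e2, edist_dist]
    exact ENNReal.ofReal_le_ofReal hlt.le
  have hrs : ∀ i, ENNReal.ofReal s ≤ rsepE (rep T t) i := by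
    intro i
    rw [rsepE]
    exact le_iInf fun j => le_iInf fun hne => hpair i j (Ne.symm hne)
  constructor
  · intro x i
    constructor
    · intro hin
      by_contra hnr
      have hrxi : rep T t x ≠ rep T t i := fun h => hnr (reach_of_rep_eq ht.le h)
      have hD : rsepE (rep T t) i ≤ edist (rep T t i) (rep T t x) := by
        rw [rsepE]
        exact iInf_le_of_le x (iInf_le _ hrxi)
      have hD0 : (0 : ℝ) ≤ dist (rep T t i) (rep T t x) := dist_nonneg
      have hsD : s < dist (rep T t i) (rep T t x) := by
        obtain ⟨m1, hm1, e1⟩ := rep_spec T t i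
        obtain ⟨m2, hm2, e2⟩ := rep_spec T t x
        have hnr' : ¬ Reach T t m1 m2 := fun h =>
          hnr (reach_trans (reach_symm hm2) (reach_trans (reach_symm h) hm1))
        have := hsep _ _ hnr'
        rw [e1, e2]
        exact this
      have hdx : dist (T x) (rep T t x) ≤ ((Q : ℝ) - 1) * t := dist_rep_le hQ ht.le x
      have hge : ε * dist (rep T t i) (rep T t x) ≤ dist (T x) (rep T t i) := by
        have htri : dist (rep T t i) (rep T t x)
            ≤ dist (rep T t i) (T x) + dist (T x) (rep T t x) := dist_triangle _ _ _
        have hcomm : dist (rep T t i) (T x) = dist (T x) (rep T t i) := dist_comm _ _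
        nlinarith [mul_nonneg hε0.le (sub_nonneg.mpr hsD.le), hD0, hε0.le]
      apply absurd hin
      rw [InProjNbhd, not_lt]
      calc ENNReal.ofReal ε * rsepE (rep T t) i
          ≤ ENNReal.ofReal ε * ENNReal.ofReal (dist (rep T t i) (rep T t x)) := by
            gcongr
            rw [edist_dist] at hD
            exact hD
        _ = ENNReal.ofReal (ε * dist (rep T t i) (rep T t x)) :=
            (ENNReal.ofReal_mul hε0.le).symm
        _ ≤ ENNReal.ofReal (dist (T x) (rep T t i)) := ENNReal.ofReal_le_ofReal hge
        _ = edist (T x) (rep T t i) := (edist_dist _ _).symm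
    · intro hr
      have he : rep T t x = rep T t i := rep_eq_of_reach hr
      have hdx : dist (T x) (rep T t i) ≤ ((Q : ℝ) - 1) * t := he ▸ dist_rep_le hQ ht.le x
      rw [InProjNbhd, edist_dist]
      calc ENNReal.ofReal (dist (T x) (rep T t i))
          ≤ ENNReal.ofReal (((Q : ℝ) - 1) * t) := ENNReal.ofReal_le_ofReal hdx
        _ < ENNReal.ofReal (ε * s) := by
            rw [ENNReal.ofReal_lt_ofReal_iff (by positivity)]
            nlinarith [mul_pos hε0 hs]
        _ = ENNReal.ofReal ε * ENNReal.ofReal s := ENNReal.ofReal_mul hε0.le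
        _ ≤ ENNReal.ofReal ε * rsepE (rep T t) i := by gcongr; exact hrs i
  · rw [sepE]
    exact le_iInf fun i => le_iInf fun j => le_iInf fun hne => hpair i j hne

lemma nat_key {Q : ℕ} (hQ2 : 2 ≤ Q) : Q ^ Q ≤ 24 ^ (3 ^ Q - (Q - 1)) := by
  have h24 : Q ≤ 24 ^ Q :=
    le_of_lt (lt_of_lt_of_le (Q.lt_two_pow_self) (Nat.pow_le_pow_left (by norm_num) Q))
  have h1 : Q ^ Q ≤ 24 ^ (Q * Q) := by
    calc Q ^ Q ≤ (24 ^ Q) ^ Q := Nat.pow_le_pow_left h24 Q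
      _ = 24 ^ (Q * Q) := by rw [← pow_mul]
  refine h1.trans (Nat.pow_le_pow_right (by norm_num) ?_)
  have h2 : ∀ m : ℕ, 2 ≤ m → m * m + m ≤ 3 ^ m + 1 := by
    intro m hm
    induction m with
    | zero => omega
    | succ k ih =>
      rcases Nat.lt_or_ge k 2 with hk | hk
      · interval_cases k <;> norm_num
      · have hih := ih (by omega)
        have hp : 3 ^ (k + 1) = 3 ^ k * 3 := pow_succ 3 k
        nlinarith [hih, hk, hp]
  have h3 : Q ≤ 3 ^ Q := le_of_lt (Nat.lt_pow_self (by norm_num : 1 < 3) : Q < 3 ^ Q)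
  have h4 := h2 Q hQ2
  omega

end Stmt3Aux

lemma Gdist_nonneg {ι : Type*} [Fintype ι] {n : ℕ} (p s : ι → EuclideanSpace ℝ (Fin n)) :
    0 ≤ Gdist p s :=
  Real.iInf_nonneg fun _ => Real.sqrt_nonneg _

lemma Gdist_le {ι : Type*} [Fintype ι] {n : ℕ} (p s : ι → EuclideanSpace ℝ (Fin n)) {B : ℝ}
    (hB : 0 ≤ B) (h : ∑ i, dist (p i) (s i) ^ 2 ≤ B ^ 2) : Gdist p s ≤ B := by
  have h1 : Gdist p s ≤ Real.sqrt (∑ i, dist (p i) (s ((1 : Equiv.Perm ι) i)) ^ 2) :=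
    ciInf_le ⟨0, by rintro _ ⟨σ, rfl⟩; exact Real.sqrt_nonneg _⟩ 1
  simp only [Equiv.Perm.coe_one, id_eq] at h1
  exact h1.trans ((Real.sqrt_le_left hB).mpr h)


set_option maxHeartbeats 2000000

/-- key combinatoric lemma. Let `0 < ε < 1/8`,
`β̃(ε,Q) = (ε + (Q−1)/β(ε,Q))⁻¹` with `β(ε,Q) = (ε/3)^(3^Q)`. For every `T ∈ 𝒜_Q(ℝⁿ)`
there exist `q ≤ Q` and points `S_0, …, S_q ∈ 𝒜_Q(ℝⁿ)` with `S_0 = Q⟦t⟧` for some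
`t ∈ spt(T)`, `S_q = T`, such that for every `k ≤ q`: (1) `spt(S_k) ⊂ spt(T)`;
(2) `spt(T) ⊂ 𝒫_ε(S_k)` and `T` is balanced with respect to `S_k` and `ε` (the number
of points of `T` in the ball around the `i`-th point of `S_k` equals the multiplicity
of that point in `S_k`); and (3) `β̃(ε,Q)^k · 𝒢(S_{k−1}, S_k) ≤ sep(S_k)` for `1 ≤ k ≤ q`. -/
theorem stmt3 (n Q : ℕ) (hQ : 0 < Q) (ε : ℝ) (hε0 : 0 < ε) (hε : ε < 1 / 8)
    (T : Fin Q → EuclideanSpace ℝ (Fin n)) :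
    ∃ q : ℕ, q ≤ Q ∧ ∃ S : ℕ → Fin Q → EuclideanSpace ℝ (Fin n),
      (∃ j : Fin Q, S 0 = fun _ => T j) ∧
      S q = T ∧
      (∀ k ≤ q, Set.range (S k) ⊆ Set.range T) ∧
      (∀ k ≤ q,
        (∀ x : Fin Q, ∃ i : Fin Q, InProjNbhd ε (S k) (T x) i) ∧
        (∀ i : Fin Q,
          Nat.card {x : Fin Q // InProjNbhd ε (S k) (T x) i}
            = Nat.card {j : Fin Q // S k j = S k i})) ∧
      (∀ k, 1 ≤ k → k ≤ q →
        ENNReal.ofReal ((ε + ((Q : ℝ) - 1) / (ε / 3) ^ (3 ^ Q))⁻¹ ^ k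
            * Gdist (S (k - 1)) (S k)) ≤ sepE (S k)) := by
  classical
  haveI : Nonempty (Fin Q) := ⟨⟨0, hQ⟩⟩
  set d : ℝ := ⨆ p : Fin Q × Fin Q, dist (T p.1) (T p.2) with hd_def
  have hbdd : BddAbove (Set.range fun p : Fin Q × Fin Q => dist (T p.1) (T p.2)) :=
    Set.Finite.bddAbove (Set.finite_range _)
  have hdist : ∀ x y : Fin Q, dist (T x) (T y) ≤ d := fun x y => le_ciSup hbdd (x, y)
  -- trivial balancedness for constant configurations
  have hconst_balance : ∀ S0 : Fin Q → EuclideanSpace ℝ (Fin n), (∀ i j, S0 i = S0 j) →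
      (∀ x : Fin Q, ∃ i : Fin Q, InProjNbhd ε S0 (T x) i) ∧
      (∀ i : Fin Q, Nat.card {x : Fin Q // InProjNbhd ε S0 (T x) i}
          = Nat.card {j : Fin Q // S0 j = S0 i}) := by
    intro S0 hc
    have htop : ∀ i, rsepE S0 i = ⊤ := by
      intro i
      rw [rsepE, iInf_eq_top]
      intro j
      rw [iInf_eq_top]
      intro hne
      exact absurd (hc j i) hne
    have hin : ∀ x i, InProjNbhd ε S0 (T x) i := by
      intro x i
      rw [InProjNbhd, htop, ENNReal.mul_top (ENNReal.ofReal_pos.mpr hε0).ne']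
      exact edist_lt_top _ _
    exact ⟨fun x => ⟨x, hin x x⟩, fun i =>
      Nat.card_congr ((Equiv.subtypeUnivEquiv (fun x => hin x i)).trans
        (Equiv.subtypeUnivEquiv (fun j => hc j i)).symm)⟩
  rcases le_or_gt d 0 with hd | hd
  · -- T is a single Q-fold point
    have hconst : ∀ x y : Fin Q, T x = T y := fun x y =>
      dist_le_zero.mp ((hdist x y).trans hd)
    refine ⟨0, Nat.zero_le _, fun _ => T, ⟨⟨0, hQ⟩, funext fun x => hconst x _⟩, rfl,
      fun k _ => subset_rfl, fun k _ => hconst_balance T (fun i j => hconst i j),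
      fun k hk1 hk0 => absurd (hk1.trans hk0) (by omega)⟩
  · -- main case
    have hpairex : ∃ x y : Fin Q, T x ≠ T y := by
      by_contra h
      push_neg at h
      have : d ≤ 0 := Real.iSup_le (fun p => by rw [h p.1 p.2, dist_self]) le_rfl
      linarith
    obtain ⟨x0, y0, hxy0⟩ := hpairex
    have hQ2 : 2 ≤ Q := by
      have h1 : x0 ≠ y0 := fun h => hxy0 (congrArg T h)
      have := Fintype.one_lt_card_iff_nontrivial.mpr ⟨x0, y0, h1⟩
      exact (by simpa using this : 1 < Q)
    have hQpos : (0 : ℝ) < Q := by exact_mod_cast hQ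
    have hQR : (1 : ℝ) ≤ (Q : ℝ) - 1 := by
      have : (2 : ℝ) ≤ (Q : ℝ) := by exact_mod_cast hQ2
      linarith
    set μ : ℝ := ε / (3 * Q) with hμ_def
    have hμ0 : 0 < μ := div_pos hε0 (by positivity)
    have hμ1 : μ < 1 := by
      rw [hμ_def, div_lt_one (by positivity)]
      nlinarith
    set tsc : ℕ → ℝ := fun j => d * μ ^ j with htsc_def
    have htp : ∀ j, 0 < tsc j := fun j => mul_pos hd (pow_pos hμ0 j)
    have htmono : ∀ {i j : ℕ}, i ≤ j → tsc j ≤ tsc i := by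
      intro i j hij
      exact mul_le_mul_of_nonneg_left (pow_le_pow_of_le_one hμ0.le hμ1.le hij) hd.le
    set Pd := Finset.univ.filter (fun p : Fin Q × Fin Q => T p.1 ≠ T p.2) with hPd_def
    have hPdne : Pd.Nonempty := ⟨(x0, y0), Finset.mem_filter.mpr ⟨Finset.mem_univ _, hxy0⟩⟩
    set m : ℝ := Pd.inf' hPdne (fun p => dist (T p.1) (T p.2)) with hm_def
    have hm0 : 0 < m := by
      rw [hm_def, Finset.lt_inf'_iff]
      intro p hp
      rw [hPd_def, Finset.mem_filter] at hp
      exact dist_pos.mpr hp.2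
    have hmle : ∀ x y : Fin Q, T x ≠ T y → m ≤ dist (T x) (T y) := by
      intro x y h
      exact Finset.inf'_le (fun p : Fin Q × Fin Q => dist (T p.1) (T p.2))
        (Finset.mem_filter.mpr ⟨Finset.mem_univ ((x, y) : Fin Q × Fin Q), h⟩)
    obtain ⟨J0, hJ0⟩ : ∃ j : ℕ, μ ^ j < m / d := exists_pow_lt_of_lt_one (div_pos hm0 hd) hμ1
    have hJsmall : ∀ j, J0 ≤ j → tsc j < m := by
      intro j hj
      calc tsc j ≤ tsc J0 := htmono hj
        _ < m := by
          rw [htsc_def]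
          simp only
          rw [mul_comm]
          exact (lt_div_iff₀ hd).mp hJ0
    have hrepT : ∀ j, J0 ≤ j → Stmt3Aux.rep T (tsc j) = T := by
      intro j hj
      funext x
      obtain ⟨mm, hmm, e⟩ := Stmt3Aux.rep_spec T (tsc j) x
      rw [e]
      refine Stmt3Aux.reach_eq_of_small ?_ hmm
      intro a b hab
      by_contra hne
      exact absurd (hmle a b hne) (not_le.mpr (hab.trans_lt (hJsmall j hj)))
    have hex : ∀ a : ℕ, Stmt3Aux.rep T (tsc a) ≠ T →
        ∃ j, a < j ∧ Stmt3Aux.rep T (tsc j) = Stmt3Aux.rep T (tsc (j - 1)) ∧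
          Stmt3Aux.rep T (tsc j) ≠ Stmt3Aux.rep T (tsc a) := by
      intro a ha
      have h1 : J0 + 1 ≤ max (J0 + 1) (a + 1) := le_max_left _ _
      have h2 : a + 1 ≤ max (J0 + 1) (a + 1) := le_max_right _ _
      refine ⟨max (J0 + 1) (a + 1), by omega, ?_, ?_⟩
      · rw [hrepT _ (by omega), hrepT _ (by omega)]
      · rw [hrepT _ (by omega)]
        exact fun h => ha h.symm
    obtain ⟨cI, hcI0, hcIstep⟩ :
        ∃ f : ℕ → ℕ, f 0 = 0 ∧ ∀ k, f (k + 1) =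
          if h : Stmt3Aux.rep T (tsc (f k)) = T then f k else Nat.find (hex (f k) h) :=
      ⟨fun k => Nat.rec 0 (fun _ a =>
        if h : Stmt3Aux.rep T (tsc a) = T then a else Nat.find (hex a h)) k,
        rfl, fun k => rfl⟩
    have hgrow : ∀ k, Stmt3Aux.rep T (tsc (cI k)) ≠ T →
        k + 1 ≤ Stmt3Aux.Npart T (tsc (cI k)) := by
      intro k
      induction k with
      | zero => intro _; exact Stmt3Aux.npart_pos hQ T _
      | succ k ih =>
        intro h
        have hk : Stmt3Aux.rep T (tsc (cI k)) ≠ T := by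
          intro he
          rw [hcIstep, dif_pos he] at h
          exact h he
        have hcIk : cI (k + 1) = Nat.find (hex (cI k) hk) := by rw [hcIstep, dif_neg hk]
        have hfind := Nat.find_spec (hex (cI k) hk)
        rw [← hcIk] at hfind
        have h3 := Stmt3Aux.npart_strict (htp (cI (k + 1))).le (htmono hfind.1.le) (Ne.symm hfind.2.2)
        have h4 := ih hk
        omega
    have hstopQ : Stmt3Aux.rep T (tsc (cI Q)) = T := by
      by_contra h
      have h1 := hgrow Q h
      have h2 := Stmt3Aux.npart_le_Q T (tsc (cI Q))
      omega
    have hstop : ∃ k, Stmt3Aux.rep T (tsc (cI k)) = T := ⟨Q, hstopQ⟩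
    have hqQ : Nat.find hstop ≤ Q := Nat.find_le hstopQ
    set q := Nat.find hstop with hq_def
    have hqspec : Stmt3Aux.rep T (tsc (cI q)) = T := Nat.find_spec hstop
    have hqmin : ∀ k, k < q → Stmt3Aux.rep T (tsc (cI k)) ≠ T := fun k hk =>
      Nat.find_min hstop hk
    -- facts about one chain step, for 1 ≤ k ≤ q
    have hstep : ∀ k, 1 ≤ k → k ≤ q →
        cI (k - 1) < cI k ∧
        Stmt3Aux.rep T (tsc (cI k)) = Stmt3Aux.rep T (tsc (cI k - 1)) ∧
        Stmt3Aux.rep T (tsc (cI k)) ≠ Stmt3Aux.rep T (tsc (cI (k - 1))) ∧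
        (∀ j, j < cI k → ¬(cI (k - 1) < j ∧
          Stmt3Aux.rep T (tsc j) = Stmt3Aux.rep T (tsc (j - 1)) ∧
          Stmt3Aux.rep T (tsc j) ≠ Stmt3Aux.rep T (tsc (cI (k - 1))))) := by
      intro k hk1 hkq
      have hk' : Stmt3Aux.rep T (tsc (cI (k - 1))) ≠ T := hqmin (k - 1) (by omega)
      have hcIk : cI k = Nat.find (hex (cI (k - 1)) hk') := by
        have h5 := hcIstep (k - 1)
        rw [dif_neg hk'] at h5
        rw [show k - 1 + 1 = k by omega] at h5
        exact h5
      have hfind := Nat.find_spec (hex (cI (k - 1)) hk')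
      rw [← hcIk] at hfind
      refine ⟨hfind.1, hfind.2.1, hfind.2.2, ?_⟩
      intro j hj
      exact Nat.find_min (hex (cI (k - 1)) hk') (hcIk ▸ hj)
    -- balancedness data for 1 ≤ k ≤ q
    have hbal : ∀ k, 1 ≤ k → k ≤ q →
        (∀ x i : Fin Q, InProjNbhd ε (Stmt3Aux.rep T (tsc (cI k))) (T x) i ↔
          Stmt3Aux.Reach T (tsc (cI k)) x i)
        ∧ ENNReal.ofReal (tsc (cI k - 1)) ≤ sepE (Stmt3Aux.rep T (tsc (cI k))) := by
      intro k hk1 hkq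
      obtain ⟨hab, hstab, hneq, hminb⟩ := hstep k hk1 hkq
      have hb1 : 1 ≤ cI k := by omega
      have hiff2 := Stmt3Aux.reach_iff_of_rep_eq (htp (cI k)).le (htp (cI k - 1)).le hstab
      have hsep : ∀ x y : Fin Q, ¬ Stmt3Aux.Reach T (tsc (cI k)) x y →
          tsc (cI k - 1) < dist (T x) (T y) := by
        intro x y h
        exact Stmt3Aux.lt_dist_of_not_reach (fun r => h ((hiff2 x y).mpr r))
      have hμeq : tsc (cI k - 1) * μ = tsc (cI k) := by
        rw [htsc_def]
        simp only
        rw [mul_assoc, ← pow_succ]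
        congr 2
        omega
      have hts : ((Q : ℝ) - 1) * tsc (cI k) * 3 ≤ ε * tsc (cI k - 1) := by
        have hεb : ε * tsc (cI k - 1) = 3 * Q * tsc (cI k) := by
          rw [← hμeq, hμ_def]
          field_simp
        rw [hεb]
        nlinarith [htp (cI k)]
      exact Stmt3Aux.balance_core hQ hε0 hε (htp (cI k)) (htp (cI k - 1)) hts hsep
    refine ⟨q, hqQ, fun k => Stmt3Aux.rep T (tsc (cI k)), ?_, hqspec, ?_, ?_, ?_⟩
    · -- S 0 is a point of multiplicity Q
      have hall : ∀ x y : Fin Q, Stmt3Aux.Reach T (tsc 0) x y := by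
        intro x y
        apply Stmt3Aux.reach_of_dist_le
        calc dist (T x) (T y) ≤ d := hdist x y
          _ = tsc 0 := by rw [htsc_def]; simp
      obtain ⟨m0, _, e0⟩ := Stmt3Aux.rep_spec T (tsc 0) ⟨0, hQ⟩
      refine ⟨m0, funext fun x => ?_⟩
      show Stmt3Aux.rep T (tsc (cI 0)) x = T m0
      rw [hcI0, Stmt3Aux.rep_eq_of_reach (hall x ⟨0, hQ⟩), e0]
    · -- supports
      rintro k _ y ⟨x, rfl⟩
      obtain ⟨mm, _, e⟩ := Stmt3Aux.rep_spec T (tsc (cI k)) x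
      exact ⟨mm, e.symm⟩
    · -- balancedness
      intro k hkq
      rcases Nat.eq_zero_or_pos k with rfl | hk1
      · have hall : ∀ x y : Fin Q, Stmt3Aux.Reach T (tsc (cI 0)) x y := by
          intro x y
          apply Stmt3Aux.reach_of_dist_le
          calc dist (T x) (T y) ≤ d := hdist x y
            _ = tsc (cI 0) := by rw [hcI0, htsc_def]; simp
        exact hconst_balance _ (fun i j => Stmt3Aux.rep_eq_of_reach (hall i j))
      · obtain ⟨hiffb, _⟩ := hbal k hk1 hkq
        refine ⟨fun x => ⟨x, (hiffb x x).mpr (Stmt3Aux.reach_refl T _ x)⟩, fun i => ?_⟩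
        exact Nat.card_congr ((Equiv.subtypeEquivRight (fun x => hiffb x i)).trans
          (Equiv.subtypeEquivRight (fun j =>
            Stmt3Aux.rep_eq_iff (htp (cI k)).le)).symm)
    · -- the 𝒢-separation estimate
      intro k hk1 hkq
      beta_reduce
      obtain ⟨hab, hstab, hneq, hminb⟩ := hstep k hk1 hkq
      obtain ⟨_, hsepEb⟩ := hbal k hk1 hkq
      set a' := cI (k - 1) with ha'def
      set b := cI k with hbdef
      have hk' : Stmt3Aux.rep T (tsc a') ≠ T := hqmin (k - 1) (by omega)
      have ha'J : a' < J0 := by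
        by_contra h
        exact hk' (hrepT a' (not_lt.mp h))
      set a := Nat.findGreatest
        (fun j => Stmt3Aux.rep T (tsc j) = Stmt3Aux.rep T (tsc a')) J0 with hadef
      have haP : Stmt3Aux.rep T (tsc a) = Stmt3Aux.rep T (tsc a') :=
        Nat.findGreatest_spec
          (P := fun j => Stmt3Aux.rep T (tsc j) = Stmt3Aux.rep T (tsc a'))
          (m := a') ha'J.le rfl
      have haa' : a' ≤ a := Nat.le_findGreatest
        (P := fun j => Stmt3Aux.rep T (tsc j) = Stmt3Aux.rep T (tsc a')) ha'J.le rfl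
      have hmax : ∀ j, a < j → Stmt3Aux.rep T (tsc j) ≠ Stmt3Aux.rep T (tsc a') := by
        intro j hj
        rcases le_or_gt j J0 with hjJ | hjJ
        · exact Nat.findGreatest_is_greatest hj hjJ
        · intro hP
          rw [hrepT j hjJ.le] at hP
          exact hk' hP.symm
      have hba : a < b := by
        by_contra h
        push_neg at h
        have h1 := Stmt3Aux.reach_iff_of_rep_eq (htp a).le (htp a').le haP
        have hrel : ∀ x y : Fin Q, Stmt3Aux.Reach T (tsc b) x y ↔
            Stmt3Aux.Reach T (tsc a') x y := by
          intro x y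
          constructor
          · exact fun hr => Stmt3Aux.reach_mono (htmono hab.le) hr
          · intro hr
            exact Stmt3Aux.reach_mono (htmono h) ((h1 x y).mpr hr)
        exact hneq (Stmt3Aux.rep_congr hrel)
      have hchg : ∀ j, a < j → j < b →
          Stmt3Aux.rep T (tsc j) ≠ Stmt3Aux.rep T (tsc (j - 1)) := by
        intro j hj1 hj2 heq
        exact (hminb j hj2) ⟨by omega, heq, hmax j hj1⟩
      have hNgrow : ∀ mdel : ℕ, a + mdel < b →
          Stmt3Aux.Npart T (tsc a) + mdel ≤ Stmt3Aux.Npart T (tsc (a + mdel)) := by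
        intro mdel
        induction mdel with
        | zero => intro _; simp
        | succ mm ih =>
          intro hlt
          have h1 := ih (by omega)
          have h2 : Stmt3Aux.rep T (tsc (a + mm + 1)) ≠ Stmt3Aux.rep T (tsc (a + mm)) := by
            have h3 := hchg (a + mm + 1) (by omega) (by omega)
            rw [show a + mm + 1 - 1 = a + mm by omega] at h3
            exact h3
          have h3 := Stmt3Aux.npart_strict (htp (a + mm + 1)).le
            (htmono (by omega : a + mm ≤ a + mm + 1)) (Ne.symm h2)
          have h4 : a + (mm + 1) = a + mm + 1 := rfl
          rw [h4]
          omega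
      have hkey : b - 1 - a ≤ Q - 1 := by
        have h1 := hNgrow (b - 1 - a) (by omega)
        have h2 := Stmt3Aux.npart_le_Q T (tsc (a + (b - 1 - a)))
        have h3 := Stmt3Aux.npart_pos hQ T (tsc a)
        omega
      -- pointwise movement bound
      have hpt : ∀ x : Fin Q, dist (Stmt3Aux.rep T (tsc a') x) (Stmt3Aux.rep T (tsc b) x)
          ≤ ((Q : ℝ) - 1) * tsc a := by
        intro x
        obtain ⟨m2, hm2, e2⟩ := Stmt3Aux.rep_spec T (tsc b) x
        have hra : Stmt3Aux.rep T (tsc a) x = Stmt3Aux.rep T (tsc a) m2 :=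
          (Stmt3Aux.rep_eq_of_reach (Stmt3Aux.reach_mono (htmono hba.le) hm2)).symm
        have hPa : Stmt3Aux.rep T (tsc a') x = Stmt3Aux.rep T (tsc a) x :=
          (congrFun haP x).symm
        rw [e2, hPa, hra, dist_comm]
        exact Stmt3Aux.dist_rep_le hQ (htp a).le m2
      have hGle : Gdist (Stmt3Aux.rep T (tsc a')) (Stmt3Aux.rep T (tsc b))
          ≤ (Q : ℝ) * (((Q : ℝ) - 1) * tsc a) := by
        apply Gdist_le _ _ (by positivity)
        calc ∑ i, dist (Stmt3Aux.rep T (tsc a') i) (Stmt3Aux.rep T (tsc b) i) ^ 2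
            ≤ ∑ _i : Fin Q, (((Q : ℝ) - 1) * tsc a) ^ 2 :=
              Finset.sum_le_sum fun i _ => by
                have h5 := hpt i
                nlinarith [dist_nonneg (x := Stmt3Aux.rep T (tsc a') i)
                  (y := Stmt3Aux.rep T (tsc b) i)]
          _ = (Q : ℝ) * (((Q : ℝ) - 1) * tsc a) ^ 2 := by
              rw [Finset.sum_const, Finset.card_univ, Fintype.card_fin, nsmul_eq_mul]
          _ ≤ ((Q : ℝ) * (((Q : ℝ) - 1) * tsc a)) ^ 2 := by
              nlinarith [htp a, sq_nonneg (((Q : ℝ) - 1) * tsc a)]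
      -- the arithmetic of the constants
      set den : ℝ := ε + ((Q : ℝ) - 1) / (ε / 3) ^ (3 ^ Q) with hden_def
      have hε3pos : (0 : ℝ) < (ε / 3) ^ (3 ^ Q) := by positivity
      have hden0 : 0 < den := by
        have := div_pos (by linarith : (0:ℝ) < (Q : ℝ) - 1) hε3pos
        rw [hden_def]
        linarith
      have hβ0 : 0 < den⁻¹ := inv_pos.mpr hden0
      have hβ1 : den⁻¹ ≤ 1 := by
        apply inv_le_one_of_one_le₀
        have h1 : (ε / 3) ^ (3 ^ Q) ≤ 1 := pow_le_one₀ (by linarith) (by linarith)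
        have h2 : (1 : ℝ) ≤ ((Q : ℝ) - 1) / (ε / 3) ^ (3 ^ Q) := by
          rw [le_div_iff₀ hε3pos]
          linarith
        rw [hden_def]
        linarith
      have hKEY : (Q : ℝ) * ((Q : ℝ) - 1) * den⁻¹ ≤ μ ^ (Q - 1) := by
        set R : ℝ := 3 / ε with hRdef
        have hR24 : (24 : ℝ) ≤ R := by
          rw [hRdef, le_div_iff₀ hε0]
          linarith
        have hR0 : (0 : ℝ) < R := by linarith
        have hRQ0 : (0 : ℝ) < R * Q := by positivity
        have hεR : ((Q : ℝ) - 1) / (ε / 3) ^ (3 ^ Q) = ((Q : ℝ) - 1) * R ^ (3 ^ Q) := by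
          rw [show ε / 3 = R⁻¹ by rw [hRdef, inv_div], inv_pow, div_inv_eq_mul]
        have hμR : μ = (R * Q)⁻¹ := by
          rw [hμ_def, hRdef]
          field_simp
        have hQN : Q - 1 + (3 ^ Q - (Q - 1)) = 3 ^ Q := by
          have : Q < 3 ^ Q := Nat.lt_pow_self (by norm_num : 1 < 3)
          omega
        have hK5 : (Q : ℝ) ^ Q ≤ R ^ (3 ^ Q - (Q - 1)) := by
          calc (Q : ℝ) ^ Q = ((Q ^ Q : ℕ) : ℝ) := by push_cast; ring
            _ ≤ ((24 ^ (3 ^ Q - (Q - 1)) : ℕ) : ℝ) := by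
                exact_mod_cast Stmt3Aux.nat_key hQ2
            _ = (24 : ℝ) ^ (3 ^ Q - (Q - 1)) := by push_cast; ring
            _ ≤ R ^ (3 ^ Q - (Q - 1)) := pow_le_pow_left₀ (by norm_num) hR24 _
        have hK4 : (Q : ℝ) * (R * Q) ^ (Q - 1) ≤ R ^ (3 ^ Q) := by
          have h6 : (R * Q) ^ (Q - 1) = R ^ (Q - 1) * (Q : ℝ) ^ (Q - 1) := mul_pow _ _ _
          have h7 : R ^ (3 ^ Q) = R ^ (Q - 1) * R ^ (3 ^ Q - (Q - 1)) := by
            rw [← pow_add, hQN]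
          have h8 : (Q : ℝ) * (Q : ℝ) ^ (Q - 1) = (Q : ℝ) ^ Q := by
            rw [← pow_succ']
            congr 1
            omega
          rw [h6, h7]
          calc (Q : ℝ) * (R ^ (Q - 1) * (Q : ℝ) ^ (Q - 1))
              = R ^ (Q - 1) * ((Q : ℝ) * (Q : ℝ) ^ (Q - 1)) := by ring
            _ = R ^ (Q - 1) * (Q : ℝ) ^ Q := by rw [h8]
            _ ≤ R ^ (Q - 1) * R ^ (3 ^ Q - (Q - 1)) :=
                mul_le_mul_of_nonneg_left hK5 (pow_nonneg hR0.le _)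
        have hK2 : (Q : ℝ) * ((Q : ℝ) - 1) ≤ den * μ ^ (Q - 1) := by
          have hpowpos : (0 : ℝ) < (R * Q) ^ (Q - 1) := pow_pos hRQ0 _
          have h9 : μ ^ (Q - 1) = ((R * Q) ^ (Q - 1))⁻¹ := by rw [hμR, inv_pow]
          have h10 : den = ε + ((Q : ℝ) - 1) * R ^ (3 ^ Q) := by rw [hden_def, hεR]
          rw [h9, h10, ← div_eq_mul_inv, le_div_iff₀ hpowpos]
          have hK3 : (Q : ℝ) * ((Q : ℝ) - 1) * (R * Q) ^ (Q - 1)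
              ≤ ((Q : ℝ) - 1) * R ^ (3 ^ Q) := by
            calc (Q : ℝ) * ((Q : ℝ) - 1) * (R * Q) ^ (Q - 1)
                = ((Q : ℝ) - 1) * ((Q : ℝ) * (R * Q) ^ (Q - 1)) := by ring
              _ ≤ ((Q : ℝ) - 1) * R ^ (3 ^ Q) :=
                  mul_le_mul_of_nonneg_left hK4 (by linarith)
          linarith
        calc (Q : ℝ) * ((Q : ℝ) - 1) * den⁻¹ ≤ (den * μ ^ (Q - 1)) * den⁻¹ :=
            mul_le_mul_of_nonneg_right hK2 hβ0.le
          _ = (den * den⁻¹) * μ ^ (Q - 1) := by ring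
          _ = μ ^ (Q - 1) := by rw [mul_inv_cancel₀ hden0.ne', one_mul]
      -- conclusion
      refine le_trans (ENNReal.ofReal_le_ofReal ?_) hsepEb
      have hG0 : 0 ≤ Gdist (Stmt3Aux.rep T (tsc a')) (Stmt3Aux.rep T (tsc b)) :=
        Gdist_nonneg _ _
      have hβk : den⁻¹ ^ k ≤ den⁻¹ := by
        calc den⁻¹ ^ k ≤ den⁻¹ ^ 1 := pow_le_pow_of_le_one hβ0.le hβ1 hk1
          _ = den⁻¹ := pow_one _
      have h1 : tsc (b - 1) = tsc a * μ ^ (b - 1 - a) := by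
        rw [htsc_def]
        simp only
        rw [mul_assoc, ← pow_add]
        congr 2
        omega
      have h2 : μ ^ (Q - 1) ≤ μ ^ (b - 1 - a) :=
        pow_le_pow_of_le_one hμ0.le hμ1.le hkey
      have hmain : den⁻¹ * ((Q : ℝ) * (((Q : ℝ) - 1) * tsc a)) ≤ tsc (b - 1) := by
        calc den⁻¹ * ((Q : ℝ) * (((Q : ℝ) - 1) * tsc a))
            = ((Q : ℝ) * ((Q : ℝ) - 1) * den⁻¹) * tsc a := by ring
          _ ≤ μ ^ (Q - 1) * tsc a := mul_le_mul_of_nonneg_right hKEY (htp a).le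
          _ ≤ μ ^ (b - 1 - a) * tsc a := mul_le_mul_of_nonneg_right h2 (htp a).le
          _ = tsc (b - 1) := by rw [h1]; ring
      calc den⁻¹ ^ k * Gdist (Stmt3Aux.rep T (tsc a')) (Stmt3Aux.rep T (tsc b))
          ≤ den⁻¹ * Gdist (Stmt3Aux.rep T (tsc a')) (Stmt3Aux.rep T (tsc b)) :=
            mul_le_mul_of_nonneg_right hβk hG0
        _ ≤ den⁻¹ * ((Q : ℝ) * (((Q : ℝ) - 1) * tsc a)) :=
            mul_le_mul_of_nonneg_left hGle hβ0.le
        _ ≤ tsc (b - 1) := hmain
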